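/- Let 𝒞 be a finite nonempty set of closed intervals on ℝ, let r ≥ 0, and let [α, β] be an interval in 𝒞 with minimal right endpoint. Let c' ∈ ℝ be any point with dist(c', [α, β]) ≤ r. Then every interval of 𝒞 that is within distance r of c' is also within distance r of the point c = β + r. (Hence placing a center at β + r is at least as good as any feasible center for the leftmost-ending interval.) -/
import Mathlib

open Metric

lemma infDist_Icc_le_iff {a b x r : ℝ} (hab : a ≤ b) (hr : 0 ≤ r) :
    infDist x (Set.Icc a b) ≤ r ↔ a - r ≤ x ∧ x ≤ b + r := by
  constructor
  · intro h
    obtain ⟨y, hy, hyd⟩ := (isCompact_Icc : IsCompact (Set.Icc a b)).exists_infDist_eq_dist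
      (Set.nonempty_Icc.mpr hab) x
    rw [hyd, Real.dist_eq] at h
    have := abs_le.mp h
    obtain ⟨hy1, hy2⟩ := hy
    constructor <;> linarith [this.1, this.2]
  · rintro ⟨h1, h2⟩
    set p := max a (min x b) with hp
    have hpmem : p ∈ Set.Icc a b := ⟨le_max_left _ _, max_le hab (min_le_right _ _)⟩
    have : dist x p ≤ r := by
      rw [Real.dist_eq, abs_le]
      rcases le_total x b with hxb | hxb
      · rcases le_total a x with hax | hax
        · have : p = x := by rw [hp, min_eq_left hxb, max_eq_right hax]
          rw [this]; constructor <;> linarith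
        · have : p = a := by rw [hp, min_eq_left hxb, max_eq_left hax]
          rw [this]; constructor <;> linarith
      · have : p = b := by rw [hp, min_eq_right hxb, max_eq_right hab]
        rw [this]; constructor <;> linarith
    exact le_trans (infDist_le_dist_of_mem hpmem) this

theorem stmt_13
    (𝒞 : Finset (ℝ × ℝ)) (h𝒞 : 𝒞.Nonempty) (hval : ∀ I ∈ 𝒞, I.1 ≤ I.2)
    (r : ℝ) (hr : 0 ≤ r)
    (α β : ℝ) (hαβ : (α, β) ∈ 𝒞)
    (hmin : ∀ I ∈ 𝒞, β ≤ I.2)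
    (c' : ℝ) (hc' : infDist c' (Set.Icc α β) ≤ r) :
    ∀ I ∈ 𝒞, infDist c' (Set.Icc I.1 I.2) ≤ r →
      infDist (β + r) (Set.Icc I.1 I.2) ≤ r := by
  intro I hI hIc
  have hab : I.1 ≤ I.2 := hval I hI
  have hαβ' : α ≤ β := hval _ hαβ
  rw [infDist_Icc_le_iff hαβ' hr] at hc'
  rw [infDist_Icc_le_iff hab hr] at hIc ⊢
  exact ⟨by linarith [hc'.2, hIc.1], by linarith [hmin I hI]⟩
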